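/- Let x, λ : [0,∞) → ℝ be differentiable with x(0) > 0, λ(0) < 0, and suppose x'(t) = λ(t)·x(t) and λ'(t) ≤ λ(t) + λ(t)² for all t ≥ 0. Then: (i) λ(t) < 0 for all t ≥ 0; (ii) x(t) > 0 for all t and x is nonincreasing; (iii) limsup_{t→∞} λ(t) ≤ −1. -/

import Mathlib

open Filter

/-- Riccati comparison argument: if `x' = λ·x`, `λ' ≤ λ + λ²` on `[0,∞)` with
`x(0) > 0` and `λ(0) < 0`, then `λ` stays negative, `x` stays positive and is
nonincreasing, and `limsup λ ≤ −1` (i.e. eventually `λ ≤ −1 + ε` for every `ε > 0`). -/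
theorem stmt5 (x lam : ℝ → ℝ)
    (hx0 : 0 < x 0) (hlam0 : lam 0 < 0)
    (hdx : ∀ t : ℝ, 0 ≤ t → HasDerivAt x (lam t * x t) t)
    (hdiff : ∀ t : ℝ, 0 ≤ t → DifferentiableAt ℝ lam t)
    (hineq : ∀ t : ℝ, 0 ≤ t → deriv lam t ≤ lam t + (lam t) ^ 2) :
    (∀ t : ℝ, 0 ≤ t → lam t < 0) ∧
    ((∀ t : ℝ, 0 ≤ t → 0 < x t) ∧ AntitoneOn x (Set.Ici 0)) ∧
    (∀ ε > (0 : ℝ), ∀ᶠ t in atTop, lam t ≤ -1 + ε) := by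
  classical
  -- a continuous extension of `lam`
  set f : ℝ → ℝ := fun t => lam (max t 0) with hf
  have hfc : Continuous f := by
    rw [continuous_iff_continuousAt]
    intro t
    have hm : Continuous (fun t : ℝ => max t 0) := continuous_id.max continuous_const
    show ContinuousAt (lam ∘ fun s : ℝ => max s 0) t
    exact ContinuousAt.comp ((hdiff (max t 0) (le_max_right _ _)).continuousAt) hm.continuousAt
  have hfeq : ∀ t : ℝ, 0 ≤ t → f t = lam t := by
    intro t ht; simp [hf, max_eq_left ht]
  -- antiderivative of `f`
  set L : ℝ → ℝ := fun t => ∫ s in (0:ℝ)..t, f s with hLdef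
  have hLd : ∀ t : ℝ, HasDerivAt L (f t) t := by
    intro t
    exact intervalIntegral.integral_hasDerivAt_right
      (hfc.intervalIntegrable _ _) (hfc.stronglyMeasurableAtFilter _ _) hfc.continuousAt
  have hL0 : L 0 = 0 := by simp [hLdef]
  have hlamd : ∀ t : ℝ, 0 ≤ t → HasDerivAt lam (deriv lam t) t := fun t ht =>
    (hdiff t ht).hasDerivAt
  -- Step 1: `lam` stays negative
  set g : ℝ → ℝ := fun t => lam t * Real.exp (-(t + L t)) with hg
  have hgd : ∀ t : ℝ, 0 ≤ t →
      HasDerivAt g (deriv lam t * Real.exp (-(t + L t)) +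
        lam t * (Real.exp (-(t + L t)) * (-(1 + f t)))) t := by
    intro t ht
    exact (hlamd t ht).mul (((hasDerivAt_id t).add (hLd t)).neg.exp)
  have hganti : AntitoneOn g (Set.Ici 0) := by
    apply antitoneOn_of_deriv_nonpos (convex_Ici 0)
    · intro t ht
      exact ((hgd t ht).continuousAt).continuousWithinAt
    · intro t ht
      rw [interior_Ici] at ht
      exact ((hgd t (le_of_lt ht)).differentiableAt).differentiableWithinAt
    · intro t ht
      rw [interior_Ici] at ht
      have ht' : (0:ℝ) ≤ t := le_of_lt ht
      rw [(hgd t ht').deriv]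
      have hE : 0 < Real.exp (-(t + L t)) := Real.exp_pos _
      have h1 := hineq t ht'
      rw [hfeq t ht']
      nlinarith
  have hlamneg : ∀ t : ℝ, 0 ≤ t → lam t < 0 := by
    intro t ht
    have h1 : g t ≤ g 0 := hganti (Set.mem_Ici.mpr (le_refl 0)) ht ht
    have h2 : g 0 = lam 0 := by simp [hg, hL0]
    have hE : 0 < Real.exp (-(t + L t)) := Real.exp_pos _
    have h3 : lam t * Real.exp (-(t + L t)) < 0 := by
      calc lam t * Real.exp (-(t + L t)) = g t := rfl
        _ ≤ g 0 := h1
        _ = lam 0 := h2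
        _ < 0 := hlam0
    nlinarith
  refine ⟨hlamneg, ⟨?_, ?_⟩, ?_⟩
  · -- positivity of x:  x t * exp (-L t) is constant
    intro t ht
    set h : ℝ → ℝ := fun t => x t * Real.exp (-L t) with hh
    have hhd : ∀ s : ℝ, 0 ≤ s →
        HasDerivAt h (lam s * x s * Real.exp (-L s) + x s * (Real.exp (-L s) * (-f s))) s := by
      intro s hs
      exact (hdx s hs).mul ((hLd s).neg.exp)
    have hderiv0 : ∀ s : ℝ, 0 ≤ s → deriv h s = 0 := by
      intro s hs
      rw [(hhd s hs).deriv, hfeq s hs]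
      ring
    have hcont : ContinuousOn h (Set.Ici 0) := by
      intro s hs
      exact ((hhd s hs).continuousAt).continuousWithinAt
    have hdiffon : DifferentiableOn ℝ h (interior (Set.Ici (0:ℝ))) := by
      intro s hs
      rw [interior_Ici] at hs
      exact ((hhd s (le_of_lt hs)).differentiableAt).differentiableWithinAt
    have hanti : AntitoneOn h (Set.Ici 0) := by
      apply antitoneOn_of_deriv_nonpos (convex_Ici 0) hcont hdiffon
      intro s hs
      rw [interior_Ici] at hs
      rw [hderiv0 s (le_of_lt hs)]
    have hmono : MonotoneOn h (Set.Ici 0) := by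
      apply monotoneOn_of_deriv_nonneg (convex_Ici 0) hcont hdiffon
      intro s hs
      rw [interior_Ici] at hs
      rw [hderiv0 s (le_of_lt hs)]
    have h1 : h t = h 0 := le_antisymm (hanti (Set.mem_Ici.mpr (le_refl 0)) ht ht) (hmono (Set.mem_Ici.mpr (le_refl 0)) ht ht)
    have h2 : h 0 = x 0 := by simp [hh, hL0]
    have h3 : x t * Real.exp (-L t) = x 0 := by rw [← h2, ← h1]
    have hE : 0 < Real.exp (-L t) := Real.exp_pos _
    nlinarith
  · -- x is nonincreasing
    -- first record positivity again (same proof packaged)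
    have hxpos : ∀ t : ℝ, 0 ≤ t → 0 < x t := by
      intro t ht
      set h : ℝ → ℝ := fun t => x t * Real.exp (-L t) with hh
      have hhd : ∀ s : ℝ, 0 ≤ s →
          HasDerivAt h (lam s * x s * Real.exp (-L s) + x s * (Real.exp (-L s) * (-f s))) s := by
        intro s hs
        exact (hdx s hs).mul ((hLd s).neg.exp)
      have hderiv0 : ∀ s : ℝ, 0 ≤ s → deriv h s = 0 := by
        intro s hs
        rw [(hhd s hs).deriv, hfeq s hs]
        ring
      have hcont : ContinuousOn h (Set.Ici 0) := by
        intro s hs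
        exact ((hhd s hs).continuousAt).continuousWithinAt
      have hdiffon : DifferentiableOn ℝ h (interior (Set.Ici (0:ℝ))) := by
        intro s hs
        rw [interior_Ici] at hs
        exact ((hhd s (le_of_lt hs)).differentiableAt).differentiableWithinAt
      have hanti : AntitoneOn h (Set.Ici 0) := by
        apply antitoneOn_of_deriv_nonpos (convex_Ici 0) hcont hdiffon
        intro s hs
        rw [interior_Ici] at hs
        rw [hderiv0 s (le_of_lt hs)]
      have hmono : MonotoneOn h (Set.Ici 0) := by
        apply monotoneOn_of_deriv_nonneg (convex_Ici 0) hcont hdiffon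
        intro s hs
        rw [interior_Ici] at hs
        rw [hderiv0 s (le_of_lt hs)]
      have h1 : h t = h 0 := le_antisymm (hanti (Set.mem_Ici.mpr (le_refl 0)) ht ht) (hmono (Set.mem_Ici.mpr (le_refl 0)) ht ht)
      have h2 : h 0 = x 0 := by simp [hh, hL0]
      have h3 : x t * Real.exp (-L t) = x 0 := by rw [← h2, ← h1]
      have hE : 0 < Real.exp (-L t) := Real.exp_pos _
      nlinarith
    apply antitoneOn_of_deriv_nonpos (convex_Ici 0)
    · intro s hs
      exact ((hdx s hs).continuousAt).continuousWithinAt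
    · intro s hs
      rw [interior_Ici] at hs
      exact ((hdx s (le_of_lt hs)).differentiableAt).differentiableWithinAt
    · intro s hs
      rw [interior_Ici] at hs
      have hs' : (0:ℝ) ≤ s := le_of_lt hs
      rw [(hdx s hs').deriv]
      have := hlamneg s hs'
      have := hxpos s hs'
      nlinarith
  · -- limsup part via ν = -1/λ
    intro ε hε
    set ν : ℝ → ℝ := fun t => -(lam t)⁻¹ with hν
    have hνpos : ∀ t : ℝ, 0 ≤ t → 0 < ν t := by
      intro t ht
      have h := inv_lt_zero.mpr (hlamneg t ht)
      simp only [hν]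
      linarith
    have hνd : ∀ t : ℝ, 0 ≤ t → HasDerivAt ν (deriv lam t / lam t ^ 2) t := by
      intro t ht
      have h1 : HasDerivAt (fun t => (lam t)⁻¹) (-(deriv lam t) / lam t ^ 2) t :=
        (hlamd t ht).inv (ne_of_lt (hlamneg t ht))
      have h2 := h1.neg
      convert h2 using 1
      · rfl
      · rfl
      · rfl
      · ring
    set w : ℝ → ℝ := fun t => (ν t - 1) * Real.exp t with hw
    have hwd : ∀ t : ℝ, 0 ≤ t →
        HasDerivAt w ((deriv lam t / lam t ^ 2) * Real.exp t + (ν t - 1) * Real.exp t) t := by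
      intro t ht
      have := (((hνd t ht).sub_const 1).mul (Real.hasDerivAt_exp t))
      convert this using 1
      all_goals rfl
    have hwanti : AntitoneOn w (Set.Ici 0) := by
      apply antitoneOn_of_deriv_nonpos (convex_Ici 0)
      · intro t ht
        exact ((hwd t ht).continuousAt).continuousWithinAt
      · intro t ht
        rw [interior_Ici] at ht
        exact ((hwd t (le_of_lt ht)).differentiableAt).differentiableWithinAt
      · intro t ht
        rw [interior_Ici] at ht
        have ht' : (0:ℝ) ≤ t := le_of_lt ht
        rw [(hwd t ht').deriv]
        have hln : lam t < 0 := hlamneg t ht'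
        have hsq : 0 < lam t ^ 2 := by nlinarith
        have h1 : deriv lam t / lam t ^ 2 ≤ 1 - ν t := by
          rw [div_le_iff₀ hsq]
          have hne : lam t ≠ 0 := ne_of_lt hln
          have h2 : (1 - ν t) * lam t ^ 2 = lam t ^ 2 + lam t := by
            simp only [hν]
            field_simp
            ring
          rw [h2]
          have := hineq t ht'
          linarith
        have hE : 0 < Real.exp t := Real.exp_pos t
        nlinarith
    set C : ℝ := ν 0 - 1 with hC
    have hbound : ∀ t : ℝ, 0 ≤ t → ν t ≤ 1 + C * Real.exp (-t) := by
      intro t ht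
      have h1 : w t ≤ w 0 := hwanti (Set.mem_Ici.mpr (le_refl 0)) ht ht
      have h2 : w 0 = C := by simp [hw, hC]
      have h3 : (ν t - 1) * Real.exp t ≤ C := by rw [← h2]; exact h1
      have hE : 0 < Real.exp t := Real.exp_pos t
      rw [← le_div_iff₀ hE] at h3
      have h4 : C / Real.exp t = C * Real.exp (-t) := by
        rw [Real.exp_neg, div_eq_mul_inv]
      rw [h4] at h3
      linarith
    by_cases hε1 : 1 ≤ ε
    · filter_upwards [eventually_ge_atTop (0:ℝ)] with t ht
      have := hlamneg t ht
      linarith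
    · push_neg at hε1
      have hδ : 0 < ε / (1 - ε) := by
        apply div_pos hε
        linarith
      have htend : Tendsto (fun t => C * Real.exp (-t)) atTop (nhds (0:ℝ)) := by
        simpa using (Real.tendsto_exp_neg_atTop_nhds_zero.const_mul C)
      have hev : ∀ᶠ t in atTop, C * Real.exp (-t) ≤ ε / (1 - ε) :=
        htend.eventually_le_const hδ
      filter_upwards [hev, eventually_ge_atTop (0:ℝ)] with t h1 ht
      have h2 : ν t ≤ 1 + ε / (1 - ε) := le_trans (hbound t ht) (by linarith)
      have h1e : (0:ℝ) < 1 - ε := by linarith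
      have hne : (1:ℝ) - ε ≠ 0 := ne_of_gt h1e
      have h3 : 1 + ε / (1 - ε) = (1 - ε)⁻¹ := by
        field_simp
        ring
      rw [h3] at h2
      have hln : lam t < 0 := hlamneg t ht
      have hνp : 0 < ν t := hνpos t ht
      -- ν t = (-lam t)⁻¹ ≤ (1-ε)⁻¹  ⟹  1 - ε ≤ -lam t
      have h4 : (-(lam t))⁻¹ ≤ (1 - ε)⁻¹ := by
        have : ν t = (-(lam t))⁻¹ := by simp [hν, inv_neg]
        rw [← this]; exact h2
      have h5 : 1 - ε ≤ -lam t := by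
        have hpos : 0 < -lam t := by linarith
        rw [inv_le_inv₀ hpos h1e] at h4
        exact h4
      linarith
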